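/- For even m, and A the set of square roots of unity {1, −1}, the maximum number of pairwise nonintersecting 2-dimensional subspaces of ℂ^m generated by vectors in A^m is exactly 2^{m−2}. -/
import Mathlib

open Submodule Module

namespace Stmt16Aux

noncomputable section

def sgn16 (b : Bool) : ℂ := if b then 1 else -1

lemma sgn16_cases (b : Bool) : sgn16 b = 1 ∨ sgn16 b = -1 := by
  cases b <;> simp [sgn16]

def vA16 (m : ℕ) (x : ℕ → Bool × Bool) : Fin m → ℂ := fun i =>
  if i.1 = 0 then 1 else if i.1 = 1 then 1 else
    if (i.1 - 2) % 2 = 0 then sgn16 (x ((i.1 - 2) / 2)).1 else sgn16 (x ((i.1 - 2) / 2)).2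

def vB16 (m : ℕ) (x : ℕ → Bool × Bool) : Fin m → ℂ := fun i =>
  if i.1 = 0 then 1 else if i.1 = 1 then -1 else
    if (i.1 - 2) % 2 = 0 then sgn16 (x ((i.1 - 2) / 2)).2 else - sgn16 (x ((i.1 - 2) / 2)).1

variable {m : ℕ} {x : ℕ → Bool × Bool}

lemma vA16_0 (h : 0 < m) : vA16 m x ⟨0, h⟩ = 1 := by simp [vA16]

lemma vA16_1 (h : 1 < m) : vA16 m x ⟨1, h⟩ = 1 := by simp [vA16]

lemma vB16_0 (h : 0 < m) : vB16 m x ⟨0, h⟩ = 1 := by simp [vB16]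

lemma vB16_1 (h : 1 < m) : vB16 m x ⟨1, h⟩ = -1 := by simp [vB16]

lemma vA16_even (j : ℕ) (h : 2*j+2 < m) : vA16 m x ⟨2*j+2, h⟩ = sgn16 (x j).1 := by
  simp only [vA16]
  rw [if_neg (by omega), if_neg (by omega), if_pos (by omega), show (2*j+2-2)/2 = j by omega]

lemma vA16_odd (j : ℕ) (h : 2*j+3 < m) : vA16 m x ⟨2*j+3, h⟩ = sgn16 (x j).2 := by
  simp only [vA16]
  rw [if_neg (by omega), if_neg (by omega), if_neg (by omega), show (2*j+3-2)/2 = j by omega]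

lemma vB16_even (j : ℕ) (h : 2*j+2 < m) : vB16 m x ⟨2*j+2, h⟩ = sgn16 (x j).2 := by
  simp only [vB16]
  rw [if_neg (by omega), if_neg (by omega), if_pos (by omega), show (2*j+2-2)/2 = j by omega]

lemma vB16_odd (j : ℕ) (h : 2*j+3 < m) : vB16 m x ⟨2*j+3, h⟩ = - sgn16 (x j).1 := by
  simp only [vB16]
  rw [if_neg (by omega), if_neg (by omega), if_neg (by omega), show (2*j+3-2)/2 = j by omega]

lemma vA16_entries (i : Fin m) : vA16 m x i = 1 ∨ vA16 m x i = -1 := by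
  unfold vA16
  split_ifs <;> first
    | (left; rfl)
    | exact sgn16_cases _

lemma vB16_entries (i : Fin m) : vB16 m x i = 1 ∨ vB16 m x i = -1 := by
  unfold vB16
  split_ifs with h1 h2 h3
  · left; rfl
  · right; rfl
  · exact sgn16_cases _
  · rcases sgn16_cases ((x ((i.1 - 2) / 2)).1) with h | h <;> rw [h] <;> norm_num

/-- Key linear algebra: rotated sign pairs force trivial solutions. -/
lemma key16 (b1 b2 c1 c2 : Bool) (hne : ¬(b1 = c1 ∧ b2 = c2)) (a b : ℂ)
    (e1 : a * sgn16 b1 + b * sgn16 b2 = a * sgn16 c1 + b * sgn16 c2)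
    (e2 : a * sgn16 b2 + b * (- sgn16 b1) = a * sgn16 c2 + b * (- sgn16 c1)) :
    a = 0 ∧ b = 0 := by
  have h1 : a * (sgn16 b1 - sgn16 c1) + b * (sgn16 b2 - sgn16 c2) = 0 := by
    linear_combination e1
  have h2 : a * (sgn16 b2 - sgn16 c2) - b * (sgn16 b1 - sgn16 c1) = 0 := by
    linear_combination e2
  have hPQ : (sgn16 b1 - sgn16 c1)^2 + (sgn16 b2 - sgn16 c2)^2 ≠ 0 := by
    cases b1 <;> cases b2 <;> cases c1 <;> cases c2 <;> norm_num [sgn16] <;>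
      exact hne ⟨rfl, rfl⟩
  constructor
  · have h3 : a * ((sgn16 b1 - sgn16 c1)^2 + (sgn16 b2 - sgn16 c2)^2) = 0 := by
      linear_combination (sgn16 b1 - sgn16 c1) * h1 + (sgn16 b2 - sgn16 c2) * h2
    exact (mul_eq_zero.mp h3).resolve_right hPQ
  · have h3 : b * ((sgn16 b1 - sgn16 c1)^2 + (sgn16 b2 - sgn16 c2)^2) = 0 := by
      linear_combination (sgn16 b2 - sgn16 c2) * h1 - (sgn16 b1 - sgn16 c1) * h2
    exact (mul_eq_zero.mp h3).resolve_right hPQ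

lemma indep16 (hm : 2 ≤ m) (x : ℕ → Bool × Bool) :
    LinearIndependent ℂ ![vA16 m x, vB16 m x] := by
  rw [LinearIndependent.pair_iff]
  intro s t hst
  have e0 : s * vA16 m x ⟨0, by omega⟩ + t * vB16 m x ⟨0, by omega⟩ = 0 := by
    simpa using congrFun hst ⟨0, by omega⟩
  have e1 : s * vA16 m x ⟨1, by omega⟩ + t * vB16 m x ⟨1, by omega⟩ = 0 := by
    simpa using congrFun hst ⟨1, by omega⟩
  rw [vA16_0, vB16_0] at e0
  rw [vA16_1, vB16_1] at e1
  constructor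
  · linear_combination (e0 + e1) / 2
  · linear_combination (e0 - e1) / 2

lemma rank16 (hm : 2 ≤ m) (x : ℕ → Bool × Bool) :
    Module.finrank ℂ (span ℂ {vA16 m x, vB16 m x}) = 2 := by
  have h2 := finrank_span_eq_card (indep16 hm x)
  have hr : Set.range ![vA16 m x, vB16 m x] = {vA16 m x, vB16 m x} := by
    simp [Matrix.range_cons, Matrix.range_empty, Set.pair_comm]
  rw [hr] at h2
  simpa using h2

lemma inter16 (x y : ℕ → Bool × Bool) (j : ℕ) (hj : 2*j+3 < m)
    (hxy : x j ≠ y j) :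
    span ℂ {vA16 m x, vB16 m x} ⊓ span ℂ {vA16 m y, vB16 m y} = ⊥ := by
  rw [eq_bot_iff]
  intro u hu
  rw [Submodule.mem_inf] at hu
  obtain ⟨hux, huy⟩ := hu
  obtain ⟨a, b, hab⟩ := Submodule.mem_span_pair.mp hux
  obtain ⟨c, d, hcd⟩ := Submodule.mem_span_pair.mp huy
  have hE : a • vA16 m x + b • vB16 m x = c • vA16 m y + d • vB16 m y := hab.trans hcd.symm
  have e0 : a * vA16 m x ⟨0, by omega⟩ + b * vB16 m x ⟨0, by omega⟩
      = c * vA16 m y ⟨0, by omega⟩ + d * vB16 m y ⟨0, by omega⟩ := by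
    simpa using congrFun hE ⟨0, by omega⟩
  have e1 : a * vA16 m x ⟨1, by omega⟩ + b * vB16 m x ⟨1, by omega⟩
      = c * vA16 m y ⟨1, by omega⟩ + d * vB16 m y ⟨1, by omega⟩ := by
    simpa using congrFun hE ⟨1, by omega⟩
  have e2 : a * vA16 m x ⟨2*j+2, by omega⟩ + b * vB16 m x ⟨2*j+2, by omega⟩
      = c * vA16 m y ⟨2*j+2, by omega⟩ + d * vB16 m y ⟨2*j+2, by omega⟩ := by
    simpa using congrFun hE ⟨2*j+2, by omega⟩
  have e3 : a * vA16 m x ⟨2*j+3, by omega⟩ + b * vB16 m x ⟨2*j+3, by omega⟩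
      = c * vA16 m y ⟨2*j+3, by omega⟩ + d * vB16 m y ⟨2*j+3, by omega⟩ := by
    simpa using congrFun hE ⟨2*j+3, by omega⟩
  rw [vA16_0, vB16_0, vA16_0, vB16_0] at e0
  rw [vA16_1, vB16_1, vA16_1, vB16_1] at e1
  rw [vA16_even, vB16_even, vA16_even, vB16_even] at e2
  rw [vA16_odd, vB16_odd, vA16_odd, vB16_odd] at e3
  have hac : a = c := by linear_combination (e0 + e1) / 2
  have hbd : b = d := by linear_combination (e0 - e1) / 2
  rw [← hac, ← hbd] at e2 e3
  obtain ⟨ha0, hb0⟩ := key16 (x j).1 (x j).2 (y j).1 (y j).2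
    (fun hh => hxy (Prod.ext hh.1 hh.2)) a b e2 e3
  rw [Submodule.mem_bot, ← hab, ha0, hb0]
  simp

def ext16 (k : ℕ) (x : Fin k → Bool × Bool) : ℕ → Bool × Bool :=
  fun t => if h : t < k then x ⟨t, h⟩ else (true, true)

end

end Stmt16Aux

/-- For even `m` and alphabet `{1, -1}`, the maximum number of pairwise
nonintersecting planes of `ℂ^m` generated by `±1`-vectors is exactly `2^(m-2)`. -/
theorem stmt_16 (m : ℕ) (hm : 2 ≤ m) (hme : Even m) :
    IsGreatest {n : ℕ | ∃ S : Finset (Submodule ℂ (Fin m → ℂ)),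
      S.card = n ∧
      (∀ W ∈ S, ∃ v1 v2 : Fin m → ℂ,
        (∀ i, v1 i = 1 ∨ v1 i = -1) ∧ (∀ i, v2 i = 1 ∨ v2 i = -1) ∧
        W = Submodule.span ℂ {v1, v2} ∧ Module.finrank ℂ W = 2) ∧
      (∀ W ∈ S, ∀ W' ∈ S, W ≠ W' → W ⊓ W' = ⊥)}
      (2 ^ (m - 2)) := by
  classical
  obtain ⟨t, ht⟩ := hme
  have hm2 : m = 2 * (m / 2) := by omega
  have hk1 : 1 ≤ m / 2 := by omega
  constructor
  · -- membership : construction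
    set k := m / 2 - 1 with hkdef
    set P : (Fin k → Bool × Bool) → Submodule ℂ (Fin m → ℂ) := fun x =>
      Submodule.span ℂ {Stmt16Aux.vA16 m (Stmt16Aux.ext16 k x),
        Stmt16Aux.vB16 m (Stmt16Aux.ext16 k x)} with hPdef
    have hPdisj : ∀ x y : Fin k → Bool × Bool, x ≠ y → P x ⊓ P y = ⊥ := by
      intro x y hxy
      obtain ⟨j, hj⟩ := Function.ne_iff.mp hxy
      have hjm : 2 * (j : ℕ) + 3 < m := by have := j.2; omega
      refine Stmt16Aux.inter16 _ _ j hjm ?_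
      simpa [Stmt16Aux.ext16, j.2] using hj
    have hPinj : Function.Injective P := by
      intro x y hxyP
      by_contra hxy
      have hbot := hPdisj x y hxy
      rw [hxyP, inf_idem] at hbot
      have hmem : Stmt16Aux.vA16 m (Stmt16Aux.ext16 k y) ∈ P y :=
        Submodule.subset_span (Set.mem_insert _ _)
      rw [hbot, Submodule.mem_bot] at hmem
      have h0 := congrFun hmem ⟨0, by omega⟩
      rw [Stmt16Aux.vA16_0] at h0
      simpa using h0
    refine ⟨Finset.image P Finset.univ, ?_, ?_, ?_⟩
    · rw [Finset.card_image_of_injective _ hPinj, Finset.card_univ]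
      rw [Fintype.card_fun]
      have : Fintype.card (Bool × Bool) = 4 := by simp
      rw [this, Fintype.card_fin]
      have h4 : (4:ℕ) = 2 ^ 2 := rfl
      rw [h4, ← pow_mul]
      congr 1
      omega
    · intro W hW
      obtain ⟨x, _, rfl⟩ := Finset.mem_image.mp hW
      refine ⟨Stmt16Aux.vA16 m (Stmt16Aux.ext16 k x), Stmt16Aux.vB16 m (Stmt16Aux.ext16 k x),
        fun i => Stmt16Aux.vA16_entries i, fun i => Stmt16Aux.vB16_entries i, rfl, ?_⟩
      exact Stmt16Aux.rank16 hm _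
    · intro W hW W' hW' hne
      obtain ⟨x, _, rfl⟩ := Finset.mem_image.mp hW
      obtain ⟨y, _, rfl⟩ := Finset.mem_image.mp hW'
      exact hPdisj x y (fun h => hne (by rw [h]))
  · -- upper bound
    rintro n ⟨S, rfl, hgen, hdisj⟩
    set T : Finset (Fin m → ℂ) :=
      Fintype.piFinset (fun _ : Fin m => ({1, -1} : Finset ℂ)) with hTdef
    have hTcard : T.card = 2 ^ m := by
      rw [hTdef, Fintype.card_piFinset]
      have h2 : ({1, -1} : Finset ℂ).card = 2 := by
        rw [Finset.card_insert_of_notMem (by norm_num), Finset.card_singleton]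
      simp [h2]
    set f : Submodule ℂ (Fin m → ℂ) → Finset (Fin m → ℂ) :=
      fun W => T.filter (· ∈ W) with hfdef
    -- each plane contains exactly 4 sign vectors
    have hcard4 : ∀ W ∈ S, (f W).card = 4 := by
      intro W hW
      obtain ⟨v1, v2, hv1, hv2, hWspan, hWrank⟩ := hgen W hW
      have hv2ne0 : v2 ≠ 0 := by
        intro h
        have := hv2 ⟨0, by omega⟩
        rw [h] at this
        simpa using this
      have hv1ne0 : v1 ≠ 0 := by
        intro h
        have := hv1 ⟨0, by omega⟩
        rw [h] at this
        simpa using this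
      -- independence
      have hind : ∀ a b : ℂ, a • v1 + b • v2 = 0 → a = 0 ∧ b = 0 := by
        intro a b hab
        by_contra hcon
        rcases not_and_or.mp hcon with ha | hb
        · have h1 : a • v1 = (-b) • v2 := by
            rw [neg_smul]
            exact eq_neg_of_add_eq_zero_left hab
          have h2 : v1 = (a⁻¹ * -b) • v2 := by
            rw [mul_smul, ← h1, inv_smul_smul₀ ha]
          have hle : Submodule.span ℂ {v1, v2} ≤ Submodule.span ℂ {v2} := by
            rw [Submodule.span_le, Set.insert_subset_iff, Set.singleton_subset_iff]
            constructor
            · show v1 ∈ Submodule.span ℂ {v2}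
              rw [h2]
              exact Submodule.smul_mem _ _ (Submodule.mem_span_singleton_self v2)
            · exact Submodule.mem_span_singleton_self v2
          have hmono : Module.finrank ℂ W ≤ Module.finrank ℂ (Submodule.span ℂ ({v2} : Set (Fin m → ℂ))) := by
            rw [hWspan]
            exact Submodule.finrank_mono hle
          rw [hWrank, finrank_span_singleton hv2ne0] at hmono
          omega
        · have h1 : b • v2 = (-a) • v1 := by
            rw [neg_smul]
            exact eq_neg_of_add_eq_zero_right hab
          have h2 : v2 = (b⁻¹ * -a) • v1 := by
            rw [mul_smul, ← h1, inv_smul_smul₀ hb]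
          have hle : Submodule.span ℂ {v1, v2} ≤ Submodule.span ℂ {v1} := by
            rw [Submodule.span_le, Set.insert_subset_iff, Set.singleton_subset_iff]
            constructor
            · exact Submodule.mem_span_singleton_self v1
            · show v2 ∈ Submodule.span ℂ {v1}
              rw [h2]
              exact Submodule.smul_mem _ _ (Submodule.mem_span_singleton_self v1)
          have hmono : Module.finrank ℂ W ≤ Module.finrank ℂ (Submodule.span ℂ ({v1} : Set (Fin m → ℂ))) := by
            rw [hWspan]
            exact Submodule.finrank_mono hle
          rw [hWrank, finrank_span_singleton hv1ne0] at hmono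
          omega
      have hne12 : v1 ≠ v2 := by
        intro h
        have := hind 1 (-1) (by rw [h]; simp)
        simpa using this.1
      have hne12' : v1 ≠ -v2 := by
        intro h
        have := hind 1 1 (by rw [h]; simp)
        simpa using this.1
      -- a coordinate where they agree
      have hex_i0 : ∃ i, v1 i = v2 i := by
        by_contra hno
        push_neg at hno
        apply hne12'
        funext i
        rw [Pi.neg_apply]
        have hd := hno i
        rcases hv1 i with h1 | h1 <;> rcases hv2 i with h2 | h2 <;>
          rw [h1, h2] at hd ⊢ <;>
          first
            | exact absurd rfl hd
            | norm_num
      obtain ⟨i0, hi0⟩ := hex_i0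
      have hex_j0 : ∃ j, v1 j = -(v2 j) := by
        by_contra hno
        push_neg at hno
        apply hne12
        funext i
        have hd := hno i
        rcases hv1 i with h1 | h1 <;> rcases hv2 i with h2 | h2 <;>
          rw [h1, h2] at hd ⊢ <;>
          first
            | rfl
            | exact absurd rfl hd
            | norm_num at hd
      obtain ⟨j0, hj0⟩ := hex_j0
      -- sign solving helper
      have solve1 : ∀ p q s : ℂ, (p = 1 ∨ p = -1) → (q = 1 ∨ q = -1) → s * p = q →
          s = 1 ∨ s = -1 := by
        intro p q s hp hq h
        rcases hp with rfl | rfl <;> rcases hq with rfl | rfl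
        · left; linear_combination h
        · right; linear_combination h
        · right; linear_combination -h
        · left; linear_combination -h
      have hset : f W = ({v1, -v1, v2, -v2} : Finset (Fin m → ℂ)) := by
        ext u
        simp only [hfdef, Finset.mem_filter, Finset.mem_insert, Finset.mem_singleton]
        constructor
        · rintro ⟨huT, huW⟩
          have hu_pm : ∀ i, u i = 1 ∨ u i = -1 := by
            intro i
            have := Fintype.mem_piFinset.mp huT i
            simpa using this
          rw [hWspan] at huW
          obtain ⟨a, b, hab⟩ := Submodule.mem_span_pair.mp huW
          have ei0 : a * v1 i0 + b * v2 i0 = u i0 := by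
            simpa using congrFun hab i0
          have ej0 : a * v1 j0 + b * v2 j0 = u j0 := by
            simpa using congrFun hab j0
          have hsum : (a + b) * v1 i0 = u i0 := by
            rw [hi0] at ei0 ⊢
            linear_combination ei0
          have hdiff : (a - b) * v1 j0 = u j0 := by
            have hv2j : v2 j0 = -(v1 j0) := by rw [hj0, neg_neg]
            rw [hv2j] at ej0
            linear_combination ej0
          have hab1 := solve1 _ _ _ (hv1 i0) (hu_pm i0) hsum
          have hab2 := solve1 _ _ _ (hv1 j0) (hu_pm j0) hdiff
          rcases hab1 with h1 | h1 <;> rcases hab2 with h2 | h2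
          · left
            have ha : a = 1 := by linear_combination (h1 + h2) / 2
            have hb : b = 0 := by linear_combination (h1 - h2) / 2
            rw [← hab, ha, hb]; simp
          · right; right; left
            have ha : a = 0 := by linear_combination (h1 + h2) / 2
            have hb : b = 1 := by linear_combination (h1 - h2) / 2
            rw [← hab, ha, hb]; simp
          · right; right; right
            have ha : a = 0 := by linear_combination (h1 + h2) / 2
            have hb : b = -1 := by linear_combination (h1 - h2) / 2
            rw [← hab, ha, hb]; simp
          · right; left
            have ha : a = -1 := by linear_combination (h1 + h2) / 2
            have hb : b = 0 := by linear_combination (h1 - h2) / 2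
            rw [← hab, ha, hb]; simp
        · have hTmem : ∀ w : Fin m → ℂ, (∀ i, w i = 1 ∨ w i = -1) → w ∈ T := by
            intro w hw
            rw [hTdef, Fintype.mem_piFinset]
            intro i
            rcases hw i with h | h <;> simp [h]
          have hv1W : v1 ∈ W := by
            rw [hWspan]; exact Submodule.subset_span (Set.mem_insert _ _)
          have hv2W : v2 ∈ W := by
            rw [hWspan]
            exact Submodule.subset_span (Set.mem_insert_of_mem _ rfl)
          rintro (rfl | rfl | rfl | rfl)
          · exact ⟨hTmem _ hv1, hv1W⟩
          · refine ⟨hTmem _ ?_, Submodule.neg_mem _ hv1W⟩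
            intro i
            rcases hv1 i with h | h <;> simp [h]
          · exact ⟨hTmem _ hv2, hv2W⟩
          · refine ⟨hTmem _ ?_, Submodule.neg_mem _ hv2W⟩
            intro i
            rcases hv2 i with h | h <;> simp [h]
      -- distinctness for the card computation
      have hne_self1 : v1 ≠ -v1 := by
        intro h
        have := congrFun h i0
        rcases hv1 i0 with h1 | h1 <;> rw [Pi.neg_apply, h1] at this <;> norm_num at this
      have hne_self2 : v2 ≠ -v2 := by
        intro h
        have := congrFun h i0
        rcases hv2 i0 with h1 | h1 <;> rw [Pi.neg_apply, h1] at this <;> norm_num at this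
      have hne3 : -v1 ≠ v2 := by
        intro h
        apply hne12'
        rw [← h, neg_neg]
      have hne4 : -v1 ≠ -v2 := fun h => hne12 (neg_injective h)
      have hne5 : v1 ≠ -v2 := hne12'
      rw [hset]
      rw [Finset.card_insert_of_notMem (by simp [hne_self1, hne12, hne5]),
        Finset.card_insert_of_notMem (by simp [hne3, hne4]),
        Finset.card_insert_of_notMem (by simp [hne_self2]),
        Finset.card_singleton]
    have hdisj2 : ∀ W ∈ S, ∀ W' ∈ S, W ≠ W' → Disjoint (f W) (f W') := by
      intro W hW W' hW' hne
      rw [Finset.disjoint_left]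
      intro u hu hu'
      have h1 : u ∈ W := (Finset.mem_filter.mp hu).2
      have h2 : u ∈ W' := (Finset.mem_filter.mp hu').2
      have hmem : u ∈ W ⊓ W' := Submodule.mem_inf.mpr ⟨h1, h2⟩
      rw [hdisj W hW W' hW' hne, Submodule.mem_bot] at hmem
      have huT : u ∈ T := (Finset.mem_filter.mp hu).1
      have := Fintype.mem_piFinset.mp huT ⟨0, by omega⟩
      rw [hmem] at this
      norm_num at this
    have hkey : 4 * S.card ≤ 2 ^ m := by
      calc 4 * S.card = ∑ _W ∈ S, 4 := by rw [Finset.sum_const, smul_eq_mul, mul_comm]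
        _ = ∑ W ∈ S, (f W).card := Finset.sum_congr rfl (fun W hW => (hcard4 W hW).symm)
        _ = (S.biUnion f).card := (Finset.card_biUnion hdisj2).symm
        _ ≤ T.card := Finset.card_le_card
            (Finset.biUnion_subset.mpr (fun W _ => Finset.filter_subset _ _))
        _ = 2 ^ m := hTcard
    have h2m : (2:ℕ) ^ m = 4 * 2 ^ (m - 2) := by
      conv_lhs => rw [show m = 2 + (m - 2) from by omega]
      rw [pow_add]
      norm_num
    rw [h2m] at hkey
    exact Nat.le_of_mul_le_mul_left hkey (by norm_num)
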